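/- arXiv:0811.4714 — 4 statements merged into one kernel-verified Lean document; each statement's English description precedes it below -/
import Mathlib

section
/- The characteristic polynomial of the 4×4 matrix F = σQ, where σ is the standard symplectic matrix and Q is the symmetric matrix of the quadratic form q(x₁,x₂,ξ₁,ξ₂) = ξ₁² + ξ₂² + (1−ν²)x₁² + (1+ν²)x₂² − 2ω(x₁ξ₂ − x₂ξ₁), equals λ⁴ + 2(1+ω²)λ² + (1−ω²)² − ν⁴ = (λ² + 1 + ω²)² − (ν⁴ + 4ω²). -/
open Matrix

/-- The characteristic polynomial of `F = σ Q` where `Q` is the matrix of the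
quadratic form `q` and `σ` the standard symplectic matrix. -/
theorem charpoly_of_fundamental_matrix (ω ν : ℝ)
    (Q : Matrix (Fin 4) (Fin 4) ℝ)
    (hQ : Q = !![1 - ν^2, 0, 0, -ω;
                 0, 1 + ν^2, ω, 0;
                 0, ω, 1, 0;
                 -ω, 0, 0, 1])
    (σ : Matrix (Fin 4) (Fin 4) ℝ)
    (hσ : σ = !![0, 0, 1, 0;
                 0, 0, 0, 1;
                 -1, 0, 0, 0;
                 0, -1, 0, 0]) :
    ∀ lam : ℝ,
      (σ * Q - lam • (1 : Matrix (Fin 4) (Fin 4) ℝ)).det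
        = lam^4 + 2*(1+ω^2)*lam^2 + (1-ω^2)^2 - ν^4
      ∧ lam^4 + 2*(1+ω^2)*lam^2 + (1-ω^2)^2 - ν^4
        = (lam^2 + 1 + ω^2)^2 - (ν^4 + 4*ω^2) := by
  intro lam
  subst hQ hσ
  refine ⟨?_, by ring⟩
  simp [Matrix.det_succ_row_zero, Fin.sum_univ_succ, Matrix.mul_apply,
    Matrix.one_apply, Fin.sum_univ_four, Fin.succAbove]
  ring
end

section
/- Let ω, ν > 0 with ω² + ν² < 1, α = √(ν⁴+4ω²), μ₁² = 1+ω²−α, μ₂² = 1+ω²+α. The quadratic form q = ξ₁² + ξ₂² + (1−ν²)x₁² + (1+ν²)x₂² − 2ω(x₁ξ₂−x₂ξ₁) satisfies the identity q = ((α−2ω²+ν²)/(2α))·[ξ₁ − ((α−ν²)/(2ω))x₂]² + ((α+2ω²−ν²)/(2αμ₂²))·ε²·[ξ₂ + ((α+ν²)/(2ω))x₁]² + 2ω²·((1+ω²+α)/(α(α+2ω²+ν²)))·[ξ₁ + ((α+ν²)/(2ω))x₂]² + ((α+2ω²+ν²)/(2α))·[ξ₂ − ((α−ν²)/(2ω))x₁]²,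 where ε² = 1 − ω² − ν². -/
set_option maxHeartbeats 4000000 in
set_option maxRecDepth 100000 in
/-- Master symplectic decomposition of the anisotropic quadratic form. -/
theorem master_decomposition (ω ν : ℝ) (hω : 0 < ω) (hν : 0 < ν)
    (h : ω^2 + ν^2 < 1) :
    let α := Real.sqrt (ν^4 + 4*ω^2)
    let ε2 := 1 - ω^2 - ν^2
    let μ₂sq := 1 + ω^2 + α
    ∀ x₁ x₂ ξ₁ ξ₂ : ℝ,
      ξ₁^2 + ξ₂^2 + (1 - ν^2)*x₁^2 + (1 + ν^2)*x₂^2 - 2*ω*(x₁*ξ₂ - x₂*ξ₁)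
        = ((α - 2*ω^2 + ν^2)/(2*α)) * (ξ₁ - ((α - ν^2)/(2*ω))*x₂)^2
          + ((α + 2*ω^2 - ν^2)/(2*α*μ₂sq)) * ε2
              * (ξ₂ + ((α + ν^2)/(2*ω))*x₁)^2
          + 2*ω^2 * ((1 + ω^2 + α)/(α*(α + 2*ω^2 + ν^2)))
              * (ξ₁ + ((α + ν^2)/(2*ω))*x₂)^2
          + ((α + 2*ω^2 + ν^2)/(2*α)) * (ξ₂ - ((α - ν^2)/(2*ω))*x₁)^2 := by
  intro α ε2 μ₂sq x₁ x₂ ξ₁ ξ₂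
  have ht : (0:ℝ) < ν^4 + 4*ω^2 := by positivity
  have hα2 : α^2 = ν^4 + 4*ω^2 := Real.sq_sqrt ht.le
  have hαpos : 0 < α := Real.sqrt_pos.mpr ht
  have hαne : α ≠ 0 := hαpos.ne'
  have hωne : ω ≠ 0 := hω.ne'
  have hμ : μ₂sq ≠ 0 := by have : (0:ℝ) < 1 + ω^2 + α := by positivity
                           simpa [μ₂sq] using this.ne'
  have hc4 : α + 2*ω^2 + ν^2 ≠ 0 := by positivity
  have hD : (8*α*ω^2*μ₂sq*(α + 2*ω^2 + ν^2)) ≠ 0 := by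
    simp only [μ₂sq]
    positivity
  have e : ((α - 2*ω^2 + ν^2)/(2*α)) * (ξ₁ - ((α - ν^2)/(2*ω))*x₂)^2
          + ((α + 2*ω^2 - ν^2)/(2*α*μ₂sq)) * ε2
              * (ξ₂ + ((α + ν^2)/(2*ω))*x₁)^2
          + 2*ω^2 * ((1 + ω^2 + α)/(α*(α + 2*ω^2 + ν^2)))
              * (ξ₁ + ((α + ν^2)/(2*ω))*x₂)^2
          + ((α + 2*ω^2 + ν^2)/(2*α)) * (ξ₂ - ((α - ν^2)/(2*ω))*x₁)^2
        = (α^4*x₂^2 + 2*α^4*x₁^2 + α^5*x₂^2 + α^5*x₁^2 + 2*ν^2*α^3*x₁^2 + -1*ν^2*α^4*x₁^2 + -2*ν^4*α^2*x₂^2 + -2*ν^4*α^2*x₁^2 + -2*ν^4*α^3*x₂^2 + -4*ν^4*α^3*x₁^2 + -2*ν^6*α*x₁^2 + ν^8*x₂^2 + ν^8*α*x₂^2 + 3*ν^8*α*x₁^2 + ν^10*x₁^2 + -4*ω*α^3*x₂*ξ₁ + -4*ω*α^4*x₂*ξ₁ + -4*ω*α^4*x₁*ξ₂ + -4*ω*ν^2*α^2*x₂*ξ₁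 + -4*ω*ν^2*α^3*x₂*ξ₁ + -8*ω*ν^2*α^3*x₁*ξ₂ + 4*ω*ν^4*α*x₂*ξ₁ + 4*ω*ν^4*α^2*x₂*ξ₁ + 4*ω*ν^6*x₂*ξ₁ + 4*ω*ν^6*α*x₂*ξ₁ + 8*ω*ν^6*α*x₁*ξ₂ + 4*ω*ν^8*x₁*ξ₂ + 8*ω^2*α^2*ξ₂^2 + 4*ω^2*α^2*ξ₁^2 + 4*ω^2*α^2*x₂^2 + 4*ω^2*α^3*ξ₂^2 + 4*ω^2*α^3*ξ₁^2 + 8*ω^2*α^3*x₂^2 + 8*ω^2*α^3*x₁^2 + 5*ω^2*α^4*x₂^2 + 4*ω^2*α^4*x₁^2 + 8*ω^2*ν^2*α*ξ₂^2 + 8*ω^2*ν^2*α*ξ₁^2 + 8*ω^2*ν^2*α*x₂^2 + 4*ω^2*ν^2*α^2*ξ₂^2 + 8*ω^2*ν^2*α^2*ξ₁^2 + 16*ω^2*ν^2*α^2*x₂^2 + 4*ω^2*ν^2*α^2*x₁^2 + 8*ω^2*ν^2*α^3*x₂^2 + -10*ω^2*ν^2*α^3*x₁^2 + 4*ω^2*ν^4*ξ₁^2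 + 4*ω^2*ν^4*x₂^2 + 4*ω^2*ν^4*α*ξ₂^2 + 4*ω^2*ν^4*α*ξ₁^2 + 8*ω^2*ν^4*α*x₂^2 + 2*ω^2*ν^4*α^2*x₂^2 + -14*ω^2*ν^4*α^2*x₁^2 + 4*ω^2*ν^6*ξ₂^2 + 4*ω^2*ν^6*x₁^2 + 2*ω^2*ν^6*α*x₁^2 + ω^2*ν^8*x₂^2 + 2*ω^2*ν^8*x₁^2 + 16*ω^3*α*x₂*ξ₁ + 32*ω^3*α^2*x₂*ξ₁ + 12*ω^3*α^3*x₂*ξ₁ + -24*ω^3*α^3*x₁*ξ₂ + 16*ω^3*ν^2*x₂*ξ₁ + 32*ω^3*ν^2*α*x₂*ξ₁ + 16*ω^3*ν^2*α*x₁*ξ₂ + 12*ω^3*ν^2*α^2*x₂*ξ₁ + -24*ω^3*ν^2*α^2*x₁*ξ₂ + 16*ω^3*ν^4*x₁*ξ₂ + 4*ω^3*ν^4*α*x₂*ξ₁ + 8*ω^3*ν^4*α*x₁*ξ₂ + 4*ω^3*ν^6*x₂*ξ₁ + 8*ω^3*ν^6*x₁*ξ₂ + 16*ω^4*ξ₁^2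 + 32*ω^4*α*ξ₂^2 + 32*ω^4*α*ξ₁^2 + 16*ω^4*α^2*ξ₂^2 + 20*ω^4*α^2*ξ₁^2 + 4*ω^4*α^2*x₂^2 + 8*ω^4*α^2*x₁^2 + 4*ω^4*α^3*x₂^2 + 4*ω^4*α^3*x₁^2 + 16*ω^4*ν^2*ξ₂^2 + 8*ω^4*ν^2*α*ξ₂^2 + 8*ω^4*ν^2*α*ξ₁^2 + 24*ω^4*ν^2*α*x₂^2 + 24*ω^4*ν^2*α^2*x₂^2 + -24*ω^4*ν^2*α^2*x₁^2 + 8*ω^4*ν^4*ξ₂^2 + 4*ω^4*ν^4*ξ₁^2 + 4*ω^4*ν^4*x₂^2 + 8*ω^4*ν^4*x₁^2 + 4*ω^4*ν^4*α*x₂^2 + -12*ω^4*ν^4*α*x₁^2 + 48*ω^5*α*x₂*ξ₁ + 48*ω^5*α^2*x₂*ξ₁ + -48*ω^5*α^2*x₁*ξ₂ + 16*ω^5*ν^2*x₂*ξ₁ + 32*ω^5*ν^2*x₁*ξ₂ + 16*ω^5*ν^2*α*x₂*ξ₁ + -16*ω^5*ν^2*α*x₁*ξ₂ + 32*ω^6*ξ₂^2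 + 16*ω^6*ξ₁^2 + 16*ω^6*α*ξ₂^2 + 16*ω^6*α*ξ₁^2 + 16*ω^6*ν^2*α*x₂^2 + -16*ω^6*ν^2*α*x₁^2 + 32*ω^7*α*x₂*ξ₁ + -32*ω^7*α*x₁*ξ₂) / (8*α*ω^2*μ₂sq*(α + 2*ω^2 + ν^2)) := by
    rw [eq_div_iff hD]
    simp only [μ₂sq, ε2]
    field_simp
    ring
  rw [e, eq_div_iff hD]
  simp only [μ₂sq]
  linear_combination (-1*α^2*x₂^2 + -2*α^2*x₁^2 + -1*α^3*x₂^2 + -1*α^3*x₁^2 + -2*ν^2*α*x₁^2 + ν^2*α^2*x₁^2 + ν^4*x₂^2 + ν^4*α*x₂^2 + 3*ν^4*α*x₁^2 + ν^6*x₁^2 + 4*ω*α*x₂*ξ₁ + 4*ω*α^2*x₂*ξ₁ + 4*ω*α^2*x₁*ξ₂ + 4*ω*ν^2*x₂*ξ₁ + 4*ω*ν^2*α*x₂*ξ₁ + 8*ω*ν^2*α*x₁*ξ₂ + 4*ω*ν^4*x₁*ξ₂ + 4*ω^2*ξ₁^2 + 4*ω^2*α*ξ₂^2 + 4*ω^2*α*ξ₁^2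 + -4*ω^2*α*x₂^2 + -4*ω^2*α*x₁^2 + -5*ω^2*α^2*x₂^2 + -4*ω^2*α^2*x₁^2 + 4*ω^2*ν^2*ξ₂^2 + 2*ω^2*ν^2*α*x₁^2 + ω^2*ν^4*x₂^2 + 2*ω^2*ν^4*x₁^2 + 4*ω^3*α*x₂*ξ₁ + 8*ω^3*α*x₁*ξ₂ + 4*ω^3*ν^2*x₂*ξ₁ + 8*ω^3*ν^2*x₁*ξ₂ + 8*ω^4*ξ₂^2 + 4*ω^4*ξ₁^2 + -4*ω^4*α*x₂^2 + -4*ω^4*α*x₁^2) * hα2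
end

section
/- The minimizer of J = inf{ ½∫t²p(t)²dt + (g₀/2)∫p(t)⁴dt : p real-valued, p ∈ L²(ℝ)∩L⁴(ℝ), ‖p‖_{L²(ℝ)} = 1 } is unique among nonnegative functions and is given by p(t)² = (3/(4R))(1 − t²/R²)₊ with R = (3g₀/2)^{1/3}; in particular this p satisfies the constraint ∫p² = 1. -/
open MeasureTheory Real

private lemma key_pointwise (g₀ R : ℝ) (hg : 0 < g₀) (hR : 0 < R) (hR3 : R^3 = 3*g₀/2)
    (t u : ℝ) (hu : 0 ≤ u) :
    (1/2)*t^2*((3/(4*R)) * max (1 - t^2/R^2) 0)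
      + (g₀/2)*((3/(4*R)) * max (1 - t^2/R^2) 0)^2
      + (R^2/2)*u + (g₀/2)*(u - (3/(4*R)) * max (1 - t^2/R^2) 0)^2
    ≤ (1/2)*t^2*u + (g₀/2)*u^2 + (R^2/2)*((3/(4*R)) * max (1 - t^2/R^2) 0) := by
  have hR2 : (0:ℝ) < R^2 := by positivity
  have hg0 : g₀ = 2*R^3/3 := by linarith
  subst hg0
  rcases le_or_gt (1 - t^2/R^2) 0 with h | h
  · rw [max_eq_right h]
    have ht : R^2 ≤ t^2 := by
      have h1 : (1:ℝ) ≤ t^2/R^2 := by linarith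
      have := (le_div_iff₀ hR2).mp h1
      linarith
    nlinarith [sq_nonneg u, mul_nonneg hu (sub_nonneg.mpr ht), hR.le, pow_pos hR 3]
  · rw [max_eq_left h.le]
    apply le_of_eq
    have hRne : R ≠ 0 := ne_of_gt hR
    field_simp
    ring

private lemma u0_eq_indicator (R : ℝ) (hR : 0 < R) :
    (fun t : ℝ => (3/(4*R)) * max (1 - t^2/R^2) 0)
      = Set.indicator (Set.Icc (-R) R) (fun t => (3/(4*R)) * (1 - t^2/R^2)) := by
  have hR2 : (0:ℝ) < R^2 := by positivity
  funext t
  rcases le_or_gt (t^2) (R^2) with h | h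
  · have hmem : t ∈ Set.Icc (-R) R :=
      ⟨by nlinarith [sq_nonneg (t+R)], by nlinarith [sq_nonneg (t-R)]⟩
    rw [Set.indicator_of_mem hmem, max_eq_left (by
      have : t^2/R^2 ≤ 1 := (div_le_one hR2).mpr h
      linarith)]
  · have hmem : t ∉ Set.Icc (-R) R := by
      intro ⟨h1, h2⟩; nlinarith
    rw [Set.indicator_of_notMem hmem, max_eq_right (by
      have : (1:ℝ) < t^2/R^2 := (one_lt_div hR2).mpr h
      linarith), mul_zero]

private lemma u0_integral (R : ℝ) (hR : 0 < R) :
    ∫ t : ℝ, (3/(4*R)) * max (1 - t^2/R^2) 0 = 1 := by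
  rw [u0_eq_indicator R hR, MeasureTheory.integral_indicator measurableSet_Icc,
    MeasureTheory.integral_Icc_eq_integral_Ioc,
    ← intervalIntegral.integral_of_le (by linarith : -R ≤ R)]
  have hRne : R ≠ 0 := ne_of_gt hR
  rw [intervalIntegral.integral_const_mul]
  have : ∫ t in (-R)..R, (1 - t^2/R^2) = (∫ t in (-R)..R, (1:ℝ)) - (∫ t in (-R)..R, t^2)/R^2 := by
    rw [← intervalIntegral.integral_div]
    apply intervalIntegral.integral_sub
    · exact intervalIntegrable_const
    · exact (intervalIntegral.intervalIntegrable_pow 2).div_const _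
  rw [this, intervalIntegral.integral_const, integral_pow]
  simp only [smul_eq_mul, mul_one]
  field_simp
  ring

/-- The 1D limiting problem `J` has the explicit inverted-parabola minimizer
`p₀(t)² = (3/(4R))(1 − t²/R²)₊`, `R = (3g₀/2)^{1/3}`, unique among
nonnegative functions. -/
theorem one_dim_minimizer (g₀ : ℝ) (hg : 0 < g₀) :
    let R : ℝ := (3*g₀/2)^((1:ℝ)/3)
    let p₀ : ℝ → ℝ := fun t => Real.sqrt ((3/(4*R)) * max (1 - t^2/R^2) 0)
    let F : (ℝ → ℝ) → ENNReal := fun p =>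
      (∫⁻ t : ℝ, ENNReal.ofReal ((1/2) * t^2 * (p t)^2))
        + ∫⁻ t : ℝ, ENNReal.ofReal ((g₀/2) * (p t)^4)
    ((∫⁻ t : ℝ, ENNReal.ofReal ((p₀ t)^2)) = 1)
    ∧ (∀ p : ℝ → ℝ, MemLp p 2 volume → MemLp p 4 volume →
        (∫⁻ t : ℝ, ENNReal.ofReal ((p t)^2)) = 1 → F p₀ ≤ F p)
    ∧ (∀ p : ℝ → ℝ, (∀ t, 0 ≤ p t) → MemLp p 2 volume → MemLp p 4 volume →
        (∫⁻ t : ℝ, ENNReal.ofReal ((p t)^2)) = 1 → F p = F p₀ →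
        p =ᵐ[volume] p₀) := by
  intro R p₀ F
  have hbase : (0:ℝ) < 3*g₀/2 := by linarith
  have hR : 0 < R := Real.rpow_pos_of_pos hbase _
  have hR3 : R^3 = 3*g₀/2 := by
    show ((3*g₀/2)^((1:ℝ)/3))^(3:ℕ) = 3*g₀/2
    rw [← Real.rpow_natCast ((3*g₀/2)^((1:ℝ)/3)) 3, ← Real.rpow_mul hbase.le]
    norm_num
  set u₀ : ℝ → ℝ := fun t => (3/(4*R)) * max (1 - t^2/R^2) 0 with hu₀def
  have hu₀ : ∀ t, 0 ≤ u₀ t := fun t => by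
    have : (0:ℝ) ≤ max (1 - t^2/R^2) 0 := le_max_right _ _
    positivity
  have hp2 : ∀ t, (p₀ t)^2 = u₀ t := fun t => Real.sq_sqrt (hu₀ t)
  have hp4 : ∀ t, (p₀ t)^4 = (u₀ t)^2 := fun t => by
    rw [show (4:ℕ) = 2*2 from rfl, pow_mul, hp2]
  have hcont : Continuous u₀ := by
    apply continuous_const.mul
    exact (continuous_const.sub ((continuous_pow 2).div_const _)).max continuous_const
  have hvanish : ∀ x ∉ Set.Icc (-R) R, u₀ x = 0 := fun x hx => by
    rw [hu₀def, u0_eq_indicator R hR]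
    exact Set.indicator_of_notMem hx _
  have hhcs : HasCompactSupport u₀ := HasCompactSupport.intro isCompact_Icc hvanish
  have hInt : Integrable u₀ := hcont.integrable_of_hasCompactSupport hhcs
  have hInt1 : Integrable (fun t => (1/2)*t^2*u₀ t) := by
    apply Continuous.integrable_of_hasCompactSupport
    · exact (continuous_const.mul (continuous_pow 2)).mul hcont
    · apply HasCompactSupport.intro (isCompact_Icc (a := -R) (b := R))
      intro x hx; simp [hvanish x hx]
  have hInt2 : Integrable (fun t => (g₀/2)*(u₀ t)^2) := by
    apply Continuous.integrable_of_hasCompactSupport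
    · exact continuous_const.mul (hcont.pow 2)
    · apply HasCompactSupport.intro (isCompact_Icc (a := -R) (b := R))
      intro x hx; simp [hvanish x hx]
  -- the normalization of u₀ at the level of lintegrals
  have hnorm : (∫⁻ t : ℝ, ENNReal.ofReal (u₀ t)) = 1 := by
    rw [← MeasureTheory.ofReal_integral_eq_lintegral_ofReal hInt (ae_of_all _ hu₀),
      hu₀def]
    rw [u0_integral R hR]; norm_num
  -- componentwise lintegrals of F p₀
  set A : ENNReal := ∫⁻ t : ℝ, ENNReal.ofReal ((1/2)*t^2*u₀ t) with hA
  set B : ENNReal := ∫⁻ t : ℝ, ENNReal.ofReal ((g₀/2)*(u₀ t)^2) with hB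
  have hFp₀ : F p₀ = A + B := by
    show (∫⁻ t : ℝ, ENNReal.ofReal ((1/2) * t^2 * (p₀ t)^2))
        + (∫⁻ t : ℝ, ENNReal.ofReal ((g₀/2) * (p₀ t)^4)) = A + B
    simp only [hp2, hp4]
    rfl
  have hAfin : A ≠ ⊤ := hInt1.lintegral_lt_top.ne
  have hBfin : B ≠ ⊤ := hInt2.lintegral_lt_top.ne
  have hCfin : ENNReal.ofReal (R^2/2) ≠ ⊤ := ENNReal.ofReal_ne_top
  -- the crucial comparison, for any admissible p
  have hmain : ∀ p : ℝ → ℝ, MemLp p 2 volume →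
      (∫⁻ t : ℝ, ENNReal.ofReal ((p t)^2)) = 1 →
      A + B + ENNReal.ofReal (R^2/2)
        + (∫⁻ t : ℝ, ENNReal.ofReal ((g₀/2)*((p t)^2 - u₀ t)^2))
      ≤ F p + ENNReal.ofReal (R^2/2) := by
    intro p hp2mem hcon
    have hpm : AEMeasurable p := hp2mem.aestronglyMeasurable.aemeasurable
    have hum : AEMeasurable (fun t => (p t)^2) := (hpm.pow_const 2)
    have key : ∀ t : ℝ,
        ENNReal.ofReal ((1/2)*t^2*u₀ t) + ENNReal.ofReal ((g₀/2)*(u₀ t)^2)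
          + ENNReal.ofReal ((R^2/2)*(p t)^2)
          + ENNReal.ofReal ((g₀/2)*((p t)^2 - u₀ t)^2)
        ≤ ENNReal.ofReal ((1/2)*t^2*(p t)^2) + ENNReal.ofReal ((g₀/2)*((p t)^2)^2)
          + ENNReal.ofReal ((R^2/2)*u₀ t) := by
      intro t
      have h1 : (0:ℝ) ≤ (1/2)*t^2*u₀ t := by
        have := hu₀ t; positivity
      have h2 : (0:ℝ) ≤ (g₀/2)*(u₀ t)^2 := by positivity
      have h3 : (0:ℝ) ≤ (R^2/2)*(p t)^2 := by positivity
      have h5 : (0:ℝ) ≤ (1/2)*t^2*(p t)^2 := by positivity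
      have h6 : (0:ℝ) ≤ (g₀/2)*((p t)^2)^2 := by positivity
      rw [← ENNReal.ofReal_add h1 h2, ← ENNReal.ofReal_add (by linarith) h3,
        ← ENNReal.ofReal_add (by positivity) (by positivity),
        ← ENNReal.ofReal_add h5 h6, ← ENNReal.ofReal_add (by linarith) (by positivity)]
      exact ENNReal.ofReal_le_ofReal
        (key_pointwise g₀ R hg hR hR3 t ((p t)^2) (sq_nonneg _))
    have hle := lintegral_mono (μ := volume) key
    have m1 : Measurable (fun t : ℝ => ENNReal.ofReal ((1/2)*t^2*u₀ t)) :=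
      ((continuous_const.mul (continuous_pow 2)).mul hcont).measurable.ennreal_ofReal
    have m2 : Measurable (fun t : ℝ => ENNReal.ofReal ((g₀/2)*(u₀ t)^2)) :=
      (continuous_const.mul (hcont.pow 2)).measurable.ennreal_ofReal
    have m7 : Measurable (fun t : ℝ => ENNReal.ofReal ((R^2/2)*u₀ t)) :=
      (continuous_const.mul hcont).measurable.ennreal_ofReal
    have m3 : AEMeasurable (fun t : ℝ => ENNReal.ofReal ((R^2/2)*(p t)^2)) :=
      (aemeasurable_const.mul hum).ennreal_ofReal
    have m4 : AEMeasurable (fun t : ℝ => ENNReal.ofReal ((g₀/2)*((p t)^2 - u₀ t)^2)) :=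
      (aemeasurable_const.mul (((hum.sub hcont.measurable.aemeasurable)).pow_const 2)).ennreal_ofReal
    have m6 : AEMeasurable (fun t : ℝ => ENNReal.ofReal ((g₀/2)*((p t)^2)^2)) :=
      (aemeasurable_const.mul (hum.pow_const 2)).ennreal_ofReal
    rw [lintegral_add_right' _ m4, lintegral_add_right' _ m3,
      lintegral_add_left m1, lintegral_add_right' _ (m7.aemeasurable),
      lintegral_add_right' _ m6] at hle
    -- identify the constraint terms
    have e1 : (∫⁻ t : ℝ, ENNReal.ofReal ((R^2/2)*(p t)^2)) = ENNReal.ofReal (R^2/2) := by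
      have : ∀ t : ℝ, ENNReal.ofReal ((R^2/2)*(p t)^2)
          = ENNReal.ofReal (R^2/2) * ENNReal.ofReal ((p t)^2) := fun t =>
        ENNReal.ofReal_mul (by positivity)
      simp only [this]
      rw [lintegral_const_mul' _ _ hCfin, hcon, mul_one]
    have e2 : (∫⁻ t : ℝ, ENNReal.ofReal ((R^2/2)*u₀ t)) = ENNReal.ofReal (R^2/2) := by
      have : ∀ t : ℝ, ENNReal.ofReal ((R^2/2)*(u₀ t))
          = ENNReal.ofReal (R^2/2) * ENNReal.ofReal (u₀ t) := fun t =>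
        ENNReal.ofReal_mul (by positivity)
      simp only [this]
      rw [lintegral_const_mul' _ _ hCfin, hnorm, mul_one]
    rw [e1, e2] at hle
    have hFp : F p = (∫⁻ t : ℝ, ENNReal.ofReal ((1/2)*t^2*(p t)^2))
        + (∫⁻ t : ℝ, ENNReal.ofReal ((g₀/2)*((p t)^2)^2)) := by
      show (∫⁻ t : ℝ, ENNReal.ofReal ((1/2) * t^2 * (p t)^2))
          + (∫⁻ t : ℝ, ENNReal.ofReal ((g₀/2) * (p t)^4)) = _
      congr 1
      apply lintegral_congr
      intro t; congr 1; ring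
    rw [hFp]
    exact hle
  refine ⟨?_, ?_, ?_⟩
  · -- normalization of p₀
    have : (fun t : ℝ => ENNReal.ofReal ((p₀ t)^2)) = fun t => ENNReal.ofReal (u₀ t) := by
      funext t; rw [hp2]
    rw [this]
    exact hnorm
  · -- minimality
    intro p hp2mem _ hcon
    have h := hmain p hp2mem hcon
    have h' : A + B + ENNReal.ofReal (R^2/2) ≤ F p + ENNReal.ofReal (R^2/2) :=
      le_trans (by exact le_add_right le_rfl) h
    rw [hFp₀]
    exact (ENNReal.add_le_add_iff_right hCfin).mp h'
  · -- uniqueness among nonnegative functions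
    intro p hpos hp2mem _ hcon hFeq
    have h := hmain p hp2mem hcon
    rw [hFeq, hFp₀] at h
    have hfin : A + B + ENNReal.ofReal (R^2/2) ≠ ⊤ := by
      simp [hAfin, hBfin, hCfin, ENNReal.add_ne_top]
    have hI0 : (∫⁻ t : ℝ, ENNReal.ofReal ((g₀/2)*((p t)^2 - u₀ t)^2)) = 0 := by
      by_contra hne
      have hpos' : 0 < ∫⁻ t : ℝ, ENNReal.ofReal ((g₀/2)*((p t)^2 - u₀ t)^2) :=
        pos_iff_ne_zero.mpr hne
      have : A + B + ENNReal.ofReal (R^2/2)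
          < A + B + ENNReal.ofReal (R^2/2)
            + (∫⁻ t : ℝ, ENNReal.ofReal ((g₀/2)*((p t)^2 - u₀ t)^2)) :=
        ENNReal.lt_add_right hfin hne
      exact absurd (lt_of_lt_of_le this h) (lt_irrefl _)
    have hpm : AEMeasurable p := hp2mem.aestronglyMeasurable.aemeasurable
    have m4 : AEMeasurable (fun t : ℝ => ENNReal.ofReal ((g₀/2)*((p t)^2 - u₀ t)^2)) :=
      (aemeasurable_const.mul ((((hpm.pow_const 2).sub hcont.measurable.aemeasurable)).pow_const 2)).ennreal_ofReal
    have hae := (lintegral_eq_zero_iff' m4).mp hI0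
    filter_upwards [hae] with t ht
    have ht' : ENNReal.ofReal ((g₀/2)*((p t)^2 - u₀ t)^2) = 0 := ht
    have hle0 : (g₀/2)*((p t)^2 - u₀ t)^2 ≤ 0 := by
      by_contra hgt
      push_neg at hgt
      exact absurd ht' (by simp [ENNReal.ofReal_eq_zero, not_le, hgt])
    have hsq : ((p t)^2 - u₀ t)^2 ≤ 0 := by
      by_contra hgt
      push_neg at hgt
      nlinarith
    have heq : (p t)^2 = u₀ t := by nlinarith [sq_nonneg ((p t)^2 - u₀ t)]
    have : p t = Real.sqrt (u₀ t) := by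
      rw [← heq, Real.sqrt_sq (hpos t)]
    exact this
end

section
/- For ρ ∈ L²(ℝ), the function u(x₁,x₂) = 2^{−1/4} e^{−πx₂²/2} ∫_ℝ e^{−(π/2)((x₁−y₁)² − 2iy₁x₂)} ρ(y₁) dy₁ belongs to Λ₀, i.e., u ∈ L²(ℝ²) and u(x₁,x₂)e^{π(x₁²+x₂²)/2} is a holomorphic function of x₁+ix₂; moreover ‖u‖_{L²(ℝ²)} ≤ 2^{1/4}‖ρ‖_{L²(ℝ)}. -/
open MeasureTheory Real Metric
open scoped ENNReal

private lemma re_aux2 (a b : ℝ) : (((a : ℝ) : ℂ) + ((b : ℝ) : ℂ) * Complex.I).re = a := by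
  simp [Complex.add_re, Complex.ofReal_re, Complex.mul_re, Complex.I_re, Complex.I_im,
    Complex.ofReal_im]

private lemma re_aux (a b : ℝ) (z : ℂ) : (((a : ℝ) : ℂ) + ((b : ℝ) : ℂ) * z).re = a + b * z.re := by
  simp [Complex.add_re, Complex.re_ofReal_mul]

private lemma nnnorm_cexp_aux (w : ℂ) : (‖Complex.exp w‖₊ : ℝ≥0∞) = ENNReal.ofReal (rexp w.re) := by
  rw [← Complex.norm_exp]; exact (ofReal_norm _).symm

private lemma gauss_memL2 : MemLp (fun y : ℝ => rexp (-(π/4) * y^2)) 2 (volume : Measure ℝ) := by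
  rw [memLp_two_iff_integrable_sq ((show Continuous fun y : ℝ => rexp (-(π/4) * y^2) by fun_prop).aestronglyMeasurable)]
  refine (integrable_exp_neg_mul_sq (show (0:ℝ) < π/2 by positivity)).congr
    (Filter.Eventually.of_forall fun y => ?_)
  show rexp (-(π/2) * y^2) = rexp (-(π/4) * y^2) ^ 2
  rw [← Real.exp_nat_mul]
  congr 1; push_cast; ring

private lemma gauss_rho_integrable {ρ : ℝ → ℂ} (hρ : MemLp ρ 2 volume) :
    Integrable (fun y : ℝ => rexp (-(π/4) * y^2) * ‖ρ y‖) volume := by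
  have h := hρ.norm.smul (φ := fun y : ℝ => rexp (-(π/4) * y^2)) gauss_memL2
      (p := 2) (q := 2) (r := 1) (hpqr := ⟨by rw [inv_one]; exact ENNReal.inv_two_add_inv_two⟩)
  exact memLp_one_iff_integrable.mp h

private lemma gauss_dom {R t : ℝ} (hR : 0 ≤ R) (ht : |t| ≤ R) (y : ℝ) :
    rexp (-(π/2) * y^2 + π * y * t) ≤ rexp (2*π*R^2) * rexp (-(π/4) * y^2) := by
  rw [← Real.exp_add]
  apply Real.exp_le_exp.mpr
  have h1 : y * t ≤ |y| * R :=
    (le_abs_self _).trans ((abs_mul y t) ▸ mul_le_mul_of_nonneg_left ht (abs_nonneg y))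
  have h2 : |y| * R ≤ y^2/8 + 2*R^2 := by nlinarith [sq_nonneg (|y| - 4*R), sq_abs y]
  nlinarith [mul_le_mul_of_nonneg_left (h1.trans h2) pi_pos.le, mul_nonneg pi_pos.le (sq_nonneg y)]

private lemma abs_le_exp_aux (y : ℝ) : |y| ≤ rexp ((π/8) * y^2) := by
  have h := Real.add_one_le_exp ((π/8) * y^2)
  nlinarith [pi_gt_three, sq_nonneg (|y| - 2), sq_abs y, sq_nonneg y]

private lemma gauss_dom' {R t : ℝ} (hR : 0 ≤ R) (ht : |t| ≤ R) (y : ℝ) :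
    |y| * rexp (-(π/2) * y^2 + π * y * t) ≤ rexp (2*π*R^2) * rexp (-(π/4) * y^2) := by
  have h1 : y * t ≤ |y| * R :=
    (le_abs_self _).trans ((abs_mul y t) ▸ mul_le_mul_of_nonneg_left ht (abs_nonneg y))
  have h2 : |y| * R ≤ y^2/8 + 2*R^2 := by nlinarith [sq_nonneg (|y| - 4*R), sq_abs y]
  calc |y| * rexp (-(π/2) * y^2 + π * y * t)
      ≤ rexp ((π/8) * y^2) * rexp (-(3*π/8) * y^2 + 2*π*R^2) := by
        refine mul_le_mul (abs_le_exp_aux y) (Real.exp_le_exp.mpr ?_) (Real.exp_pos _).le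
          (Real.exp_pos _).le
        nlinarith [mul_le_mul_of_nonneg_left (h1.trans h2) pi_pos.le,
          mul_nonneg pi_pos.le (sq_nonneg y)]
    _ = rexp (2*π*R^2) * rexp (-(π/4) * y^2) := by
        rw [← Real.exp_add, ← Real.exp_add]; congr 1; ring

private lemma entire {ρ : ℝ → ℂ} (hρ : MemLp ρ 2 volume) :
    Differentiable ℂ (fun z : ℂ =>
      ∫ y : ℝ, Complex.exp (-(π:ℂ)/2 * ((y:ℂ)^2 - 2*(y:ℂ)*z)) * ρ y) := by
  intro z₀
  set R : ℝ := ‖z₀‖ + 1 with hRdef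
  have hR0 : 0 ≤ R := by positivity
  have harg : ∀ (y : ℝ) (z : ℂ), -(π:ℂ)/2 * ((y:ℂ)^2 - 2*(y:ℂ)*z)
      = ((-(π/2) * y^2 : ℝ) : ℂ) + ((π * y : ℝ) : ℂ) * z := by
    intro y z; push_cast; ring
  have hre : ∀ (y : ℝ) (z : ℂ),
      (-(π:ℂ)/2 * ((y:ℂ)^2 - 2*(y:ℂ)*z)).re = -(π/2) * y^2 + π * y * z.re := by
    intro y z; rw [harg, re_aux]
  have hnorm : ∀ (y : ℝ) (z : ℂ), ‖Complex.exp (-(π:ℂ)/2 * ((y:ℂ)^2 - 2*(y:ℂ)*z)) * ρ y‖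
      = rexp (-(π/2) * y^2 + π * y * z.re) * ‖ρ y‖ := by
    intro y z
    rw [norm_mul, Complex.norm_exp, hre]
  have hmeas : ∀ z : ℂ, AEStronglyMeasurable
      (fun y : ℝ => Complex.exp (-(π:ℂ)/2 * ((y:ℂ)^2 - 2*(y:ℂ)*z)) * ρ y) volume := by
    intro z
    exact ((Complex.continuous_exp.comp (by fun_prop)).aestronglyMeasurable).mul hρ.1
  have hbint : Integrable
      (fun y : ℝ => π * (rexp (2*π*R^2) * (rexp (-(π/4) * y^2) * ‖ρ y‖))) volume :=
    (((gauss_rho_integrable hρ).const_mul _).const_mul _)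
  have hint : Integrable
      (fun y : ℝ => Complex.exp (-(π:ℂ)/2 * ((y:ℂ)^2 - 2*(y:ℂ)*z₀)) * ρ y) volume := by
    refine (((gauss_rho_integrable hρ).const_mul (rexp (2*π*R^2))).mono' (hmeas z₀)
      (Filter.Eventually.of_forall fun y => ?_))
    rw [hnorm]
    have h1 : |z₀.re| ≤ R := (Complex.abs_re_le_norm z₀).trans (by simp [hRdef])
    calc rexp (-(π/2) * y^2 + π * y * z₀.re) * ‖ρ y‖
        ≤ (rexp (2*π*R^2) * rexp (-(π/4) * y^2)) * ‖ρ y‖ :=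
          mul_le_mul_of_nonneg_right (gauss_dom hR0 h1 y) (norm_nonneg _)
      _ = rexp (2*π*R^2) * (rexp (-(π/4) * y^2) * ‖ρ y‖) := by ring
  have h'meas : AEStronglyMeasurable
      (fun y : ℝ => Complex.exp (-(π:ℂ)/2 * ((y:ℂ)^2 - 2*(y:ℂ)*z₀)) * ((π * y : ℝ) : ℂ) * ρ y)
      volume := by
    refine AEStronglyMeasurable.mul ?_ hρ.1
    exact ((Complex.continuous_exp.comp (by fun_prop)).mul (by fun_prop)).aestronglyMeasurable
  have hbd : ∀ᵐ y : ℝ ∂volume, ∀ z ∈ ball z₀ 1,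
      ‖Complex.exp (-(π:ℂ)/2 * ((y:ℂ)^2 - 2*(y:ℂ)*z)) * ((π * y : ℝ) : ℂ) * ρ y‖
        ≤ π * (rexp (2*π*R^2) * (rexp (-(π/4) * y^2) * ‖ρ y‖)) := by
    refine Filter.Eventually.of_forall fun y z hz => ?_
    have hzn : ‖z‖ ≤ R := by
      have h1 : ‖z‖ - ‖z₀‖ ≤ ‖z - z₀‖ := norm_sub_norm_le z z₀
      have h2 : ‖z - z₀‖ < 1 := by rwa [mem_ball, dist_eq_norm] at hz
      rw [hRdef]; linarith
    have hzre : |z.re| ≤ R := (Complex.abs_re_le_norm z).trans hzn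
    have hkey := mul_le_mul_of_nonneg_right (gauss_dom' hR0 hzre y) (norm_nonneg (ρ y))
    calc ‖Complex.exp (-(π:ℂ)/2 * ((y:ℂ)^2 - 2*(y:ℂ)*z)) * ((π * y : ℝ) : ℂ) * ρ y‖
        = rexp (-(π/2) * y^2 + π * y * z.re) * (π * |y|) * ‖ρ y‖ := by
          rw [norm_mul, norm_mul, Complex.norm_exp, hre,
            Complex.norm_real, Real.norm_eq_abs, abs_mul, abs_of_pos pi_pos]
      _ = π * ((|y| * rexp (-(π/2) * y^2 + π * y * z.re)) * ‖ρ y‖) := by ring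
      _ ≤ π * ((rexp (2*π*R^2) * rexp (-(π/4) * y^2)) * ‖ρ y‖) :=
          mul_le_mul_of_nonneg_left hkey pi_pos.le
      _ = π * (rexp (2*π*R^2) * (rexp (-(π/4) * y^2) * ‖ρ y‖)) := by ring
  have hdiff : ∀ᵐ y : ℝ ∂volume, ∀ z ∈ ball z₀ 1,
      HasDerivAt (fun z : ℂ => Complex.exp (-(π:ℂ)/2 * ((y:ℂ)^2 - 2*(y:ℂ)*z)) * ρ y)
        (Complex.exp (-(π:ℂ)/2 * ((y:ℂ)^2 - 2*(y:ℂ)*z)) * ((π * y : ℝ) : ℂ) * ρ y) z := by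
    refine Filter.Eventually.of_forall fun y z _ => ?_
    have h0 : HasDerivAt (fun z : ℂ => ((-(π/2) * y^2 : ℝ) : ℂ) + ((π * y : ℝ) : ℂ) * z)
        (((π * y : ℝ) : ℂ)) z := by
      simpa only [mul_one, id_eq] using ((hasDerivAt_id z).const_mul (((π * y : ℝ) : ℂ))).const_add
        (((-(π/2) * y^2 : ℝ) : ℂ))
    have h1 : HasDerivAt (fun z : ℂ => Complex.exp (-(π:ℂ)/2 * ((y:ℂ)^2 - 2*(y:ℂ)*z)))
        (Complex.exp (-(π:ℂ)/2 * ((y:ℂ)^2 - 2*(y:ℂ)*z)) * ((π * y : ℝ) : ℂ)) z := by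
      simp only [harg]
      exact h0.cexp
    exact h1.mul_const (ρ y)
  obtain ⟨-, hd⟩ := hasDerivAt_integral_of_dominated_loc_of_deriv_le (ball_mem_nhds z₀ one_pos)
    (Filter.Eventually.of_forall hmeas) hint h'meas hbd hbint hdiff
  exact hd.differentiableAt

/-- The test function `u = Π₀(ρ(x₁)δ₀(x₂))` belongs to `Λ₀`, with
`‖u‖_{L²(ℝ²)} ≤ 2^{1/4}‖ρ‖_{L²(ℝ)}`. -/
theorem test_function_in_LLL (ρ : ℝ → ℂ) (hρ : MemLp ρ 2 volume)
    (u : ℝ × ℝ → ℂ)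
    (hu : ∀ x₁ x₂ : ℝ,
      u (x₁, x₂) = (((2:ℝ)^(-(1:ℝ)/4) : ℝ) : ℂ)
        * Complex.exp (-(π:ℂ)/2 * ((x₂^2 : ℝ) : ℂ))
        * ∫ y₁ : ℝ, Complex.exp (-(π:ℂ)/2
            * ((((x₁ - y₁)^2 : ℝ) : ℂ) - 2 * Complex.I * y₁ * x₂)) * ρ y₁) :
    MemLp u 2 volume
    ∧ (∃ f : ℂ → ℂ, Differentiable ℂ f ∧ ∀ x₁ x₂ : ℝ,
        u (x₁, x₂) = f (x₁ + x₂ * Complex.I)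
          * Complex.exp (-(π:ℂ)/2 * ((x₁^2 + x₂^2 : ℝ) : ℂ)))
    ∧ eLpNorm u 2 volume
        ≤ ENNReal.ofReal ((2:ℝ)^((1:ℝ)/4)) * eLpNorm ρ 2 volume := by
  have hgdiff : Differentiable ℂ (fun z : ℂ =>
      ∫ y : ℝ, Complex.exp (-(π:ℂ)/2 * ((y:ℂ)^2 - 2*(y:ℂ)*z)) * ρ y) := entire hρ
  have hfdiff : Differentiable ℂ (fun z : ℂ => (((2:ℝ)^(-(1:ℝ)/4) : ℝ) : ℂ) *
      ∫ y : ℝ, Complex.exp (-(π:ℂ)/2 * ((y:ℂ)^2 - 2*(y:ℂ)*z)) * ρ y) := hgdiff.const_mul _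
  have hufact : ∀ x₁ x₂ : ℝ, u (x₁, x₂) =
      ((((2:ℝ)^(-(1:ℝ)/4) : ℝ) : ℂ) *
        ∫ y : ℝ, Complex.exp (-(π:ℂ)/2 * ((y:ℂ)^2 - 2*(y:ℂ)*((x₁:ℂ) + (x₂:ℂ)*Complex.I))) * ρ y)
      * Complex.exp (-(π:ℂ)/2 * ((x₁^2 + x₂^2 : ℝ) : ℂ)) := by
    intro x₁ x₂
    rw [hu, mul_assoc, mul_assoc]
    congr 1
    rw [← integral_const_mul, ← integral_mul_const]
    congr 1
    funext y
    calc Complex.exp (-(π:ℂ)/2 * ((x₂^2 : ℝ):ℂ)) *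
          (Complex.exp (-(π:ℂ)/2 * ((((x₁ - y)^2 : ℝ):ℂ) - 2*Complex.I*(y:ℂ)*(x₂:ℂ))) * ρ y)
        = Complex.exp (-(π:ℂ)/2 * ((x₂^2 : ℝ):ℂ) +
            -(π:ℂ)/2 * ((((x₁ - y)^2 : ℝ):ℂ) - 2*Complex.I*(y:ℂ)*(x₂:ℂ))) * ρ y := by
          rw [Complex.exp_add]; ring
      _ = Complex.exp (-(π:ℂ)/2 * ((y:ℂ)^2 - 2*(y:ℂ)*((x₁:ℂ) + (x₂:ℂ)*Complex.I)) +
            -(π:ℂ)/2 * ((x₁^2 + x₂^2 : ℝ):ℂ)) * ρ y := by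
          congr 2
          push_cast
          ring
      _ = Complex.exp (-(π:ℂ)/2 * ((y:ℂ)^2 - 2*(y:ℂ)*((x₁:ℂ) + (x₂:ℂ)*Complex.I))) * ρ y *
            Complex.exp (-(π:ℂ)/2 * ((x₁^2 + x₂^2 : ℝ):ℂ)) := by
          rw [Complex.exp_add]; ring
  have hcont : Continuous u := by
    have hu' : u = fun p : ℝ × ℝ =>
        ((((2:ℝ)^(-(1:ℝ)/4) : ℝ) : ℂ) *
          ∫ y : ℝ, Complex.exp (-(π:ℂ)/2 * ((y:ℂ)^2 - 2*(y:ℂ)*((p.1:ℂ) + (p.2:ℂ)*Complex.I))) * ρ y)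
        * Complex.exp (-(π:ℂ)/2 * ((p.1^2 + p.2^2 : ℝ) : ℂ)) := by
      funext p
      obtain ⟨x₁, x₂⟩ := p
      exact hufact x₁ x₂
    rw [hu']
    refine Continuous.mul ?_ (Complex.continuous_exp.comp (by fun_prop))
    exact hfdiff.continuous.comp (by fun_prop)
  -- the L² bound
  have hconj : Real.HolderConjugate 2 2 := Real.holderConjugate_iff.mpr ⟨one_lt_two, by norm_num⟩
  set K : ℝ → ℝ≥0∞ := fun t => ENNReal.ofReal (rexp (-(π/2) * t^2)) with hK
  have hKm : Measurable K :=
    (show Continuous fun t : ℝ => rexp (-(π/2) * t^2) by fun_prop).measurable.ennreal_ofReal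
  have hKint : ∫⁻ t : ℝ, K t = ENNReal.ofReal (Real.sqrt 2) := by
    rw [hK, ← ofReal_integral_eq_lintegral_ofReal
      (integrable_exp_neg_mul_sq (show (0:ℝ) < π/2 by positivity))
      (Filter.Eventually.of_forall fun t => (Real.exp_pos _).le)]
    rw [integral_gaussian, show π / (π/2) = 2 by field_simp]
  have hKsub : ∀ x₁ : ℝ, ∫⁻ y : ℝ, K (x₁ - y) = ENNReal.ofReal (Real.sqrt 2) := by
    intro x₁
    have hi : Integrable (fun y : ℝ => rexp (-(π/2) * (x₁ - y)^2)) volume :=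
      (integrable_comp_sub_left (fun t : ℝ => rexp (-(π/2) * t^2)) x₁).mpr
        (integrable_exp_neg_mul_sq (show (0:ℝ) < π/2 by positivity))
    rw [hK, ← ofReal_integral_eq_lintegral_ofReal hi
      (Filter.Eventually.of_forall fun t => (Real.exp_pos _).le)]
    rw [integral_sub_left_eq_self (fun t : ℝ => rexp (-(π/2) * t^2)) volume x₁]
    rw [integral_gaussian, show π / (π/2) = 2 by field_simp]
  have hKshift : ∀ y : ℝ, ∫⁻ x₁ : ℝ, K (x₁ - y) = ENNReal.ofReal (Real.sqrt 2) := by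
    intro y
    simp_rw [sub_eq_add_neg]
    rw [lintegral_add_right_eq_self K (-y)]
    exact hKint
  have hone : ∫⁻ t : ℝ, ENNReal.ofReal (rexp (-π * t^2)) = 1 := by
    rw [← ofReal_integral_eq_lintegral_ofReal (integrable_exp_neg_mul_sq pi_pos)
      (Filter.Eventually.of_forall fun t => (Real.exp_pos _).le)]
    rw [integral_gaussian, div_self pi_ne_zero, Real.sqrt_one, ENNReal.ofReal_one]
  have hρnn : AEMeasurable (fun y : ℝ => (‖ρ y‖₊ : ℝ≥0∞)) volume := hρ.1.enorm
  set A : ℝ≥0∞ := ∫⁻ y : ℝ, (‖ρ y‖₊ : ℝ≥0∞) ^ (2:ℝ) with hA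
  have hρ2 : eLpNorm ρ 2 volume = A ^ ((1:ℝ)/2) := by
    rw [eLpNorm_eq_lintegral_rpow_enorm_toReal two_ne_zero ENNReal.ofNat_ne_top, hA]
    norm_num
    rfl
  have hAne : A ≠ ⊤ := by
    intro h
    have h2 := hρ.2
    rw [hρ2, h, ENNReal.top_rpow_of_pos (by norm_num)] at h2
    exact (lt_irrefl _ h2)
  set H : ℝ → ℝ≥0∞ := fun x₁ => ∫⁻ y : ℝ, K (x₁ - y) * (‖ρ y‖₊ : ℝ≥0∞) ^ (2:ℝ) with hH
  have hhalf : ∀ x : ℝ≥0∞, (x ^ ((1:ℝ)/2)) ^ (2:ℝ) = x := fun x => by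
    rw [← ENNReal.rpow_mul]; norm_num
  have hmul2 : ∀ a b : ℝ≥0∞, (a * b) ^ (2:ℝ) = a ^ (2:ℝ) * b ^ (2:ℝ) := fun a b =>
    ENNReal.mul_rpow_of_nonneg a b (by norm_num)
  have hCS : ∀ x₁ : ℝ, (∫⁻ y : ℝ, K (x₁ - y) * ‖ρ y‖₊) ≤
      ENNReal.ofReal (Real.sqrt 2) ^ ((1:ℝ)/2) * (H x₁) ^ ((1:ℝ)/2) := by
    intro x₁
    have hf1 : AEMeasurable (fun y : ℝ => (K (x₁ - y)) ^ ((1:ℝ)/2)) volume :=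
      ((hKm.comp (measurable_const.sub measurable_id)).aemeasurable).pow_const _
    have hg1 : AEMeasurable (fun y : ℝ => (K (x₁ - y)) ^ ((1:ℝ)/2) * (‖ρ y‖₊ : ℝ≥0∞)) volume :=
      hf1.mul hρnn
    have h := ENNReal.lintegral_mul_le_Lp_mul_Lq volume hconj hf1 hg1
    simp only [Pi.mul_apply] at h
    calc (∫⁻ y : ℝ, K (x₁ - y) * ‖ρ y‖₊)
        = ∫⁻ y : ℝ, (K (x₁ - y)) ^ ((1:ℝ)/2) * ((K (x₁ - y)) ^ ((1:ℝ)/2) * ‖ρ y‖₊) := by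
          refine lintegral_congr fun y => ?_
          rw [← mul_assoc, ← ENNReal.rpow_add_of_nonneg _ _ (by norm_num) (by norm_num)]
          norm_num
      _ ≤ (∫⁻ y : ℝ, ((K (x₁ - y)) ^ ((1:ℝ)/2)) ^ (2:ℝ)) ^ ((1:ℝ)/2) *
            (∫⁻ y : ℝ, ((K (x₁ - y)) ^ ((1:ℝ)/2) * ‖ρ y‖₊) ^ (2:ℝ)) ^ ((1:ℝ)/2) := by
          simpa using h
      _ = ENNReal.ofReal (Real.sqrt 2) ^ ((1:ℝ)/2) * (H x₁) ^ ((1:ℝ)/2) := by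
          congr 1
          · rw [lintegral_congr (fun y => hhalf (K (x₁ - y))), hKsub x₁]
          · rw [hH]
            congr 1
            refine lintegral_congr fun y => ?_
            rw [hmul2, hhalf]
  have hpt : ∀ x₁ x₂ : ℝ, ((‖u (x₁, x₂)‖₊ : ℝ≥0∞)) ^ (2:ℝ)
      ≤ ENNReal.ofReal (rexp (-π * x₂^2)) * H x₁ := by
    intro x₁ x₂
    have hE₂ : (‖Complex.exp (-(π:ℂ)/2 * ((x₂^2 : ℝ):ℂ))‖₊ : ℝ≥0∞)
        = ENNReal.ofReal (rexp (-(π/2) * x₂^2)) := by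
      rw [show -(π:ℂ)/2 * ((x₂^2 : ℝ):ℂ) = ((-(π/2) * x₂^2 : ℝ):ℂ) by push_cast; ring,
        nnnorm_cexp_aux, Complex.ofReal_re]
    have hInt : ∀ y : ℝ, (‖Complex.exp (-(π:ℂ)/2 *
          ((((x₁ - y)^2 : ℝ):ℂ) - 2*Complex.I*(y:ℂ)*(x₂:ℂ))) * ρ y‖₊ : ℝ≥0∞)
        = K (x₁ - y) * ‖ρ y‖₊ := by
      intro y
      rw [nnnorm_mul, ENNReal.coe_mul, nnnorm_cexp_aux,
        show -(π:ℂ)/2 * ((((x₁ - y)^2 : ℝ):ℂ) - 2*Complex.I*(y:ℂ)*(x₂:ℂ))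
            = ((-(π/2) * (x₁ - y)^2 : ℝ):ℂ) + ((π * y * x₂ : ℝ):ℂ) * Complex.I by push_cast; ring,
        re_aux2 (-(π/2) * (x₁ - y)^2) (π * y * x₂)]
    have h1 : (‖u (x₁, x₂)‖₊ : ℝ≥0∞) ≤ ENNReal.ofReal ((2:ℝ)^(-(1:ℝ)/4)) *
        (ENNReal.ofReal (rexp (-(π/2) * x₂^2)) * ∫⁻ y : ℝ, K (x₁ - y) * ‖ρ y‖₊) := by
      rw [hu, nnnorm_mul, nnnorm_mul, ENNReal.coe_mul, ENNReal.coe_mul, mul_assoc]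
      refine mul_le_mul' (le_of_eq ?_) (mul_le_mul' (le_of_eq hE₂) ?_)
      · rw [show ((‖(((2:ℝ)^(-(1:ℝ)/4) : ℝ) : ℂ)‖₊ : ℝ≥0∞)) = ENNReal.ofReal ‖(((2:ℝ)^(-(1:ℝ)/4) : ℝ) : ℂ)‖ from (ofReal_norm _).symm, Complex.norm_real, Real.norm_eq_abs,
          abs_of_nonneg (by positivity)]
      · exact (enorm_integral_le_lintegral_enorm _).trans (le_of_eq (lintegral_congr hInt))
    calc ((‖u (x₁, x₂)‖₊ : ℝ≥0∞)) ^ (2:ℝ)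
        ≤ (ENNReal.ofReal ((2:ℝ)^(-(1:ℝ)/4)) * (ENNReal.ofReal (rexp (-(π/2) * x₂^2)) *
            (ENNReal.ofReal (Real.sqrt 2) ^ ((1:ℝ)/2) * (H x₁) ^ ((1:ℝ)/2)))) ^ (2:ℝ) := by
          refine ENNReal.rpow_le_rpow ?_ (by norm_num)
          exact h1.trans (mul_le_mul' le_rfl (mul_le_mul' le_rfl (hCS x₁)))
      _ = ENNReal.ofReal (rexp (-π * x₂^2)) * H x₁ := by
          rw [hmul2, hmul2, hmul2, hhalf, hhalf,
            ENNReal.ofReal_rpow_of_nonneg (by positivity) (by norm_num : (0:ℝ) ≤ 2),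
            ENNReal.ofReal_rpow_of_nonneg (Real.exp_pos _).le (by norm_num : (0:ℝ) ≤ 2)]
          have e1 : ((2:ℝ)^(-(1:ℝ)/4)) ^ (2:ℝ) = (2:ℝ)^(-(1:ℝ)/2) := by
            rw [← Real.rpow_mul (by norm_num : (0:ℝ) ≤ 2)]; norm_num
          have e2 : (rexp (-(π/2) * x₂^2)) ^ (2:ℝ) = rexp (-π * x₂^2) := by
            rw [show (2:ℝ) = ((2:ℕ):ℝ) by norm_num, Real.rpow_natCast, ← Real.exp_nat_mul]
            congr 1; push_cast; ring
          rw [e1, e2]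
          have e3 : ENNReal.ofReal ((2:ℝ)^(-(1:ℝ)/2)) * ENNReal.ofReal (Real.sqrt 2) = 1 := by
            rw [← ENNReal.ofReal_mul (by positivity),
              show (2:ℝ)^(-(1:ℝ)/2) * Real.sqrt 2 = 1 by
                rw [show Real.sqrt 2 = (2:ℝ)^((1:ℝ)/2) from Real.sqrt_eq_rpow 2,
                  ← Real.rpow_add (by norm_num : (0:ℝ) < 2)]
                norm_num,
              ENNReal.ofReal_one]
          calc ENNReal.ofReal ((2:ℝ)^(-(1:ℝ)/2)) * (ENNReal.ofReal (rexp (-π * x₂^2)) *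
                (ENNReal.ofReal (Real.sqrt 2) * H x₁))
              = (ENNReal.ofReal ((2:ℝ)^(-(1:ℝ)/2)) * ENNReal.ofReal (Real.sqrt 2)) *
                (ENNReal.ofReal (rexp (-π * x₂^2)) * H x₁) := by ring
            _ = ENNReal.ofReal (rexp (-π * x₂^2)) * H x₁ := by rw [e3, one_mul]
  have hHint : ∫⁻ x₁ : ℝ, H x₁ = ENNReal.ofReal (Real.sqrt 2) * A := by
    rw [hH]
    have hswap : AEMeasurable (Function.uncurry fun (x₁ y : ℝ) =>
        K (x₁ - y) * (‖ρ y‖₊ : ℝ≥0∞) ^ (2:ℝ)) ((volume : Measure ℝ).prod volume) := by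
      refine AEMeasurable.mul ?_ ?_
      · exact (hKm.comp (measurable_fst.sub measurable_snd)).aemeasurable
      · exact ((hρnn.comp_quasiMeasurePreserving
          MeasureTheory.Measure.quasiMeasurePreserving_snd).pow_const _)
    calc ∫⁻ x₁ : ℝ, ∫⁻ y : ℝ, K (x₁ - y) * (‖ρ y‖₊ : ℝ≥0∞) ^ (2:ℝ)
        = ∫⁻ y : ℝ, ∫⁻ x₁ : ℝ, K (x₁ - y) * (‖ρ y‖₊ : ℝ≥0∞) ^ (2:ℝ) :=
          lintegral_lintegral_swap hswap
      _ = ∫⁻ y : ℝ, (∫⁻ x₁ : ℝ, K (x₁ - y)) * (‖ρ y‖₊ : ℝ≥0∞) ^ (2:ℝ) := by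
          refine lintegral_congr fun y => lintegral_mul_const' _ _ ?_
          exact (ENNReal.rpow_lt_top_of_nonneg (by norm_num) ENNReal.coe_ne_top).ne
      _ = ∫⁻ y : ℝ, ENNReal.ofReal (Real.sqrt 2) * (‖ρ y‖₊ : ℝ≥0∞) ^ (2:ℝ) :=
          lintegral_congr fun y => by rw [hKshift y]
      _ = ENNReal.ofReal (Real.sqrt 2) * A :=
          lintegral_const_mul' _ _ ENNReal.ofReal_ne_top
  have hmain : ∫⁻ p : ℝ × ℝ, ((‖u p‖₊ : ℝ≥0∞)) ^ (2:ℝ) ∂volume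
      ≤ ENNReal.ofReal (Real.sqrt 2) * A := by
    rw [Measure.volume_eq_prod, lintegral_prod_symm (fun p : ℝ × ℝ => ((‖u p‖₊ : ℝ≥0∞)) ^ (2:ℝ))
      ((hcont.measurable.enorm.aemeasurable).pow_const _ :
        AEMeasurable (fun p : ℝ × ℝ => ((‖u p‖₊ : ℝ≥0∞)) ^ (2:ℝ)) _)]
    calc ∫⁻ x₂ : ℝ, ∫⁻ x₁ : ℝ, ((‖u (x₁, x₂)‖₊ : ℝ≥0∞)) ^ (2:ℝ)
        ≤ ∫⁻ x₂ : ℝ, ∫⁻ x₁ : ℝ, ENNReal.ofReal (rexp (-π * x₂^2)) * H x₁ :=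
          lintegral_mono fun x₂ => lintegral_mono fun x₁ => hpt x₁ x₂
      _ = ∫⁻ x₂ : ℝ, ENNReal.ofReal (rexp (-π * x₂^2)) * ∫⁻ x₁ : ℝ, H x₁ :=
          lintegral_congr fun x₂ => lintegral_const_mul' _ _ ENNReal.ofReal_ne_top
      _ = ∫⁻ x₂ : ℝ, ENNReal.ofReal (rexp (-π * x₂^2)) * (ENNReal.ofReal (Real.sqrt 2) * A) :=
          lintegral_congr fun x₂ => by rw [hHint]
      _ = (∫⁻ x₂ : ℝ, ENNReal.ofReal (rexp (-π * x₂^2))) * (ENNReal.ofReal (Real.sqrt 2) * A) :=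
          lintegral_mul_const' _ _ (ENNReal.mul_ne_top ENNReal.ofReal_ne_top hAne)
      _ = ENNReal.ofReal (Real.sqrt 2) * A := by rw [hone, one_mul]
  have hbound : eLpNorm u 2 volume ≤ ENNReal.ofReal ((2:ℝ)^((1:ℝ)/4)) * eLpNorm ρ 2 volume := by
    rw [eLpNorm_eq_lintegral_rpow_enorm_toReal two_ne_zero ENNReal.ofNat_ne_top, hρ2]
    norm_num only [ENNReal.toReal_ofNat]
    calc (∫⁻ p : ℝ × ℝ, ((‖u p‖₊ : ℝ≥0∞)) ^ (2:ℝ) ∂volume) ^ ((1:ℝ)/2)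
        ≤ (ENNReal.ofReal (Real.sqrt 2) * A) ^ ((1:ℝ)/2) :=
          ENNReal.rpow_le_rpow hmain (by norm_num)
      _ = ENNReal.ofReal (Real.sqrt 2) ^ ((1:ℝ)/2) * A ^ ((1:ℝ)/2) :=
          ENNReal.mul_rpow_of_nonneg _ _ (by norm_num)
      _ = ENNReal.ofReal ((2:ℝ)^((1:ℝ)/4)) * A ^ ((1:ℝ)/2) := by
          rw [ENNReal.ofReal_rpow_of_nonneg (Real.sqrt_nonneg 2) (by norm_num)]
          congr 2
          rw [show Real.sqrt 2 = (2:ℝ)^((1:ℝ)/2) from Real.sqrt_eq_rpow 2,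
            ← Real.rpow_mul (by norm_num : (0:ℝ) ≤ 2)]
          norm_num
  refine ⟨⟨hcont.aestronglyMeasurable, ?_⟩,
    ⟨fun z : ℂ => (((2:ℝ)^(-(1:ℝ)/4) : ℝ) : ℂ) *
      ∫ y : ℝ, Complex.exp (-(π:ℂ)/2 * ((y:ℂ)^2 - 2*(y:ℂ)*z)) * ρ y, hfdiff, hufact⟩, hbound⟩
  exact hbound.trans_lt (ENNReal.mul_lt_top ENNReal.ofReal_lt_top hρ.2)
end
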